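/- The class of all finite linearly ordered graphs has the Ramsey property: for every integer k ≥ 2 and all finite linearly ordered graphs G and H such that G embeds into H, there exists a finite linearly ordered graph K such that for every k-coloring of the set of embeddings of G into K there exist an embedding w : H ↪ K and a color i such that w ∘ g has color i for every embedding g : G ↪ H. -/

import Mathlib

set_option linter.unusedSectionVars false

open Function Combinatorics

namespace OGRamsey


/-- Finite hypergraph Ramsey theorem, over finsets of naturals. -/
theorem ramseyNat (a : ℕ) : ∀ (k n : ℕ), 0 < k →
    ∃ N, ∀ C : Finset ℕ → Fin k, ∀ V : Finset ℕ, N ≤ V.card →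
      ∃ T ⊆ V, T.card = n ∧ ∃ i, ∀ s ⊆ T, s.card = a → C s = i := by
  induction a with
  | zero =>
    intro k n hk
    refine ⟨n, fun C V hV => ?_⟩
    obtain ⟨T, hTV, hT⟩ := Finset.exists_subset_card_eq hV
    exact ⟨T, hTV, hT, C ∅, fun s _ hs => by rw [Finset.card_eq_zero.mp hs]⟩
  | succ a ih =>
    intro k n hk
    have Q : ∀ m r : ℕ, ∃ N, ∀ C : Finset ℕ → Fin k, ∀ V : Finset ℕ, N ≤ V.card →
        ∃ (xs A : Finset ℕ) (cf : ℕ → Fin k), xs ⊆ V ∧ A ⊆ V ∧ xs.card = m ∧ A.card = r ∧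
          (∀ x ∈ xs, ∀ y ∈ A, x < y) ∧
          (∀ x ∈ xs, ∀ s : Finset ℕ, s ⊆ (xs.filter (x < ·)) ∪ A → s.card = a →
            C (insert x s) = cf x) := by
      intro m
      induction m with
      | zero =>
        intro r
        refine ⟨r, fun C V hV => ?_⟩
        obtain ⟨A, hAV, hA⟩ := Finset.exists_subset_card_eq hV
        exact ⟨∅, A, fun _ => ⟨0, hk⟩, by simp, hAV, rfl, hA, by simp, by simp⟩
      | succ m ihm =>
        intro r
        obtain ⟨Na, hNa⟩ := ih k r hk
        obtain ⟨N, hN⟩ := ihm (Na + 1)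
        refine ⟨N, fun C V hV => ?_⟩
        obtain ⟨xs, A, cf, hxsV, hAV, hxs, hA, hord, hmono⟩ := hN C V hV
        have hApos : A.Nonempty := by
          rw [← Finset.card_pos, hA]; omega
        set x := A.min' hApos with hxdef
        have hxA : x ∈ A := A.min'_mem hApos
        have hxnotxs : x ∉ xs := fun hx => lt_irrefl x (hord x hx x hxA)
        set A' := A.erase x with hA'def
        have hA' : A'.card = Na := by
          rw [hA'def, Finset.card_erase_of_mem hxA, hA]; omega
        obtain ⟨T, hTA', hT, i, hi⟩ := hNa (fun s => C (insert x s)) A' (le_of_eq hA'.symm)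
        have hTA : T ⊆ A := hTA'.trans (Finset.erase_subset _ _)
        refine ⟨insert x xs, T, Function.update cf x i, ?_, hTA.trans hAV, ?_, hT, ?_, ?_⟩
        · exact Finset.insert_subset (hAV hxA) hxsV
        · rw [Finset.card_insert_of_notMem hxnotxs, hxs]
        · intro x₀ hx₀ y hy
          rcases Finset.mem_insert.mp hx₀ with h | hx₀
          · have hyA : y ∈ A := hTA hy
            have hyne : y ≠ x := fun h => (Finset.mem_erase.mp (hTA' hy)).1 (by rw [h])
            rw [h]
            exact lt_of_le_of_ne (A.min'_le y hyA) (Ne.symm hyne)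
          · exact hord x₀ hx₀ y (hTA hy)
        · intro x₀ hx₀ s hs hscard
          rcases Finset.mem_insert.mp hx₀ with h | hx₀
          · rw [h] at hs ⊢
            have hfil : (insert x xs).filter (x < ·) = ∅ := by
              apply Finset.filter_eq_empty_iff.mpr
              intro y hy
              rcases Finset.mem_insert.mp hy with rfl | hy
              · exact lt_irrefl _
              · exact fun h' => lt_asymm h' (hord y hy x hxA)
            rw [Function.update_self]
            refine hi s ?_ hscard
            intro z hz
            have := hs hz
            rw [hfil, Finset.empty_union] at this
            exact this
          · have hne : x₀ ≠ x := fun h => hxnotxs (h ▸ hx₀)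
            rw [Function.update_of_ne hne]
            refine hmono x₀ hx₀ s ?_ hscard
            intro z hz
            rcases Finset.mem_union.mp (hs hz) with hz' | hz'
            · rcases Finset.mem_filter.mp hz' with ⟨hz'', hlt⟩
              rcases Finset.mem_insert.mp hz'' with rfl | hz''
              · exact Finset.mem_union_right _ hxA
              · exact Finset.mem_union_left _ (Finset.mem_filter.mpr ⟨hz'', hlt⟩)
            · exact Finset.mem_union_right _ (hTA hz')
    obtain ⟨N, hN⟩ := Q (k * n + 1) 0
    refine ⟨N, fun C V hV => ?_⟩
    obtain ⟨xs, A, cf, hxsV, -, hxs, -, -, hmono⟩ := hN C V hV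
    have hpig : ∃ i ∈ (Finset.univ : Finset (Fin k)), n < (xs.filter (fun x => cf x = i)).card := by
      apply Finset.exists_lt_card_fiber_of_mul_lt_card_of_maps_to
      · intro x _; exact Finset.mem_univ _
      · rw [hxs, Finset.card_univ, Fintype.card_fin]; omega
    obtain ⟨i, -, hfib⟩ := hpig
    obtain ⟨T, hTfib, hT⟩ := Finset.exists_subset_card_eq hfib.le
    have hTxs : T ⊆ xs := hTfib.trans (Finset.filter_subset _ _)
    refine ⟨T, hTxs.trans hxsV, hT, i, fun s hsT hscard => ?_⟩
    have hspos : s.Nonempty := by rw [← Finset.card_pos, hscard]; omega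
    set x := s.min' hspos with hxdef
    have hxs' : x ∈ s := s.min'_mem hspos
    have hxT : x ∈ T := hsT hxs'
    have hcf : cf x = i := (Finset.mem_filter.mp (hTfib hxT)).2
    have herase : insert x (s.erase x) = s := Finset.insert_erase hxs'
    have : C (insert x (s.erase x)) = cf x := by
      apply hmono x (hTxs hxT) (s.erase x)
      · intro z hz
        rcases Finset.mem_erase.mp hz with ⟨hzne, hzs⟩
        apply Finset.mem_union_left
        refine Finset.mem_filter.mpr ⟨hTxs (hsT hzs), ?_⟩
        exact lt_of_le_of_ne (s.min'_le z hzs) (Ne.symm hzne)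
      · rw [Finset.card_erase_of_mem hxs', hscard]; omega
    rw [herase] at this
    rw [this, hcf]


/-- A `picture': a finite graph with vertices assigned to `parts' indexed by ℕ, and a
linear order encoded by an injective key function, in which parts are intervals. -/
structure Pic where
  V : Type
  fin : Finite V
  adj : V → V → Prop
  symm : ∀ x y, adj x y → adj y x
  irrefl : ∀ x, ¬ adj x x
  part : V → ℕ
  key : V → ℕ
  keyinj : Function.Injective key
  hpart : ∀ x y, part x < part y → key x < key y

attribute [instance] Pic.fin

instance optionFinite (B : Type*) [Finite B] : Finite (Option B) :=
  Finite.of_equiv _ (Equiv.optionEquivSumPUnit.{0} B).symm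

variable {a : ℕ}

/-- A transversal induced copy of the pattern `GA` located at parts `e`. -/
def IsCopy (GA : Fin a → Fin a → Prop) (P : Pic) (e : Fin a → ℕ) (f : Fin a → P.V) : Prop :=
  (∀ j, P.part (f j) = e j) ∧ (∀ j₁ j₂, P.adj (f j₁) (f j₂) ↔ GA j₁ j₂)

/-- Embeddings of pictures: part-preserving induced order-preserving maps. -/
def PicEmb (P Q : Pic) (F : P.V → Q.V) : Prop :=
  (∀ x, Q.part (F x) = P.part x) ∧ (∀ x y, P.adj x y ↔ Q.adj (F x) (F y)) ∧
    (∀ x y, P.key x < P.key y → Q.key (F x) < Q.key (F y))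

lemma PicEmb.refl (P : Pic) : PicEmb P P id :=
  ⟨fun _ => rfl, fun _ _ => Iff.rfl, fun _ _ h => h⟩

lemma PicEmb.comp {P Q R : Pic} {F : P.V → Q.V} {G : Q.V → R.V}
    (hF : PicEmb P Q F) (hG : PicEmb Q R G) : PicEmb P R (G ∘ F) :=
  ⟨fun x => (hG.1 _).trans (hF.1 x),
   fun x y => (hF.2.1 x y).trans (hG.2.1 _ _),
   fun x y h => hG.2.2 _ _ (hF.2.2 x y h)⟩

lemma PicEmb.inj {P Q : Pic} {F : P.V → Q.V} (h : PicEmb P Q F) : Function.Injective F := by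
  intro x y hxy
  rcases Nat.lt_trichotomy (P.key x) (P.key y) with h1 | h1 | h1
  · exact absurd (hxy ▸ h.2.2 x y h1) (lt_irrefl _)
  · exact P.keyinj h1
  · exact absurd (hxy ▸ h.2.2 y x h1) (lt_irrefl _)

lemma PicEmb.copy {P Q : Pic} {F : P.V → Q.V} (h : PicEmb P Q F)
    {GA : Fin a → Fin a → Prop} {e : Fin a → ℕ} {f : Fin a → P.V} (hf : IsCopy GA P e f) :
    IsCopy GA Q e (F ∘ f) :=
  ⟨fun j => (h.1 _).trans (hf.1 j), fun j₁ j₂ => ((h.2.1 _ _).symm).trans (hf.2 j₁ j₂)⟩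

section Stage

variable (GA : Fin a → Fin a → Prop) (P : Pic) (e : Fin a → ℕ)

/-- The alphabet: copies of the pattern at parts `e` in `P`. -/
def Cop : Type := {f : Fin a → P.V // IsCopy GA P e f}

instance : Finite (Cop GA P e) := by unfold Cop; infer_instance

open scoped Classical in
/-- The index (if any) for which `e` takes a given part value. -/
noncomputable def pidx : ℕ → Option (Fin a) := fun p =>
  if h : ∃ j, e j = p then some h.choose else none

lemma pidx_some (he : Function.Injective e) (j : Fin a) : pidx e (e j) = some j := by
  have hex : ∃ j', e j' = e j := ⟨j, rfl⟩
  unfold pidx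
  rw [dif_pos hex]
  exact congrArg some (he hex.choose_spec)

lemma pidx_spec {p : ℕ} {j : Fin a} (h : pidx e p = some j) : e j = p := by
  unfold pidx at h
  by_cases hex : ∃ j', e j' = p
  · rw [dif_pos hex] at h
    cases h
    exact hex.choose_spec
  · rw [dif_neg hex] at h
    cases h

variable (ι : Type)

/-- Vertices of the new picture: words (for parts hit by `e`) and attached fresh copies. -/
def QV : Type := (ι → P.V) ⊕ ((ι → Option (Cop GA P e)) × P.V)

instance [Finite ι] : Finite (QV GA P e ι) := by
  unfold QV
  haveI := P.fin
  infer_instance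

/-- The word associated to a line, a vertex and an index. -/
def wrd (l : Line (Cop GA P e) ι) (x : P.V) (j : Fin a) : ι → P.V :=
  fun s => (l.idxFun s).elim x (fun lam => lam.1 j)

lemma wrd_none {l : Line (Cop GA P e) ι} {x : P.V} {j : Fin a} {s : ι}
    (h : l.idxFun s = none) : wrd GA P e ι l x j s = x := by
  unfold wrd; rw [h]; rfl

lemma wrd_some {l : Line (Cop GA P e) ι} {x : P.V} {j : Fin a} {s : ι} {lam : Cop GA P e}
    (h : l.idxFun s = some lam) : wrd GA P e ι l x j s = lam.1 j := by
  unfold wrd; rw [h]; rfl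

/-- The embedding of `P` into the new picture associated to a line `l`. -/
noncomputable def Emap (l : Line (Cop GA P e) ι) (x : P.V) : QV GA P e ι :=
  (pidx e (P.part x)).elim (Sum.inr (l.idxFun, x)) (fun j => Sum.inl (wrd GA P e ι l x j))

lemma Emap_inl {l : Line (Cop GA P e) ι} {x : P.V} {j : Fin a}
    (h : pidx e (P.part x) = some j) :
    Emap GA P e ι l x = Sum.inl (wrd GA P e ι l x j) := by
  unfold Emap; rw [h]; rfl

lemma Emap_inr {l : Line (Cop GA P e) ι} {x : P.V}
    (h : pidx e (P.part x) = none) :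
    Emap GA P e ι l x = Sum.inr (l.idxFun, x) := by
  unfold Emap; rw [h]; rfl

/-- Part function of the new picture. -/
def partQ (i₀ : ι) : QV GA P e ι → ℕ :=
  Sum.elim (fun w => P.part (w i₀)) (fun q => P.part q.2)

/-- The word vertices of the new picture. -/
def Smap (p : ι → Cop GA P e) : Fin a → QV GA P e ι :=
  fun j => Sum.inl (fun s => ((p s).1 j))

/-- Adjacency of the new picture. -/
def adjQ (u v : QV GA P e ι) : Prop :=
  ∃ l : Line (Cop GA P e) ι, ∃ x y : P.V,
    P.adj x y ∧ u = Emap GA P e ι l x ∧ v = Emap GA P e ι l y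

lemma Emap_part (i₀ : ι) (l : Line (Cop GA P e) ι) (x : P.V) :
    partQ GA P e ι i₀ (Emap GA P e ι l x) = P.part x := by
  cases h : pidx e (P.part x) with
  | none => rw [Emap_inr GA P e ι h]; rfl
  | some j =>
    rw [Emap_inl GA P e ι h]
    show P.part (wrd GA P e ι l x j i₀) = P.part x
    cases h2 : l.idxFun i₀ with
    | none => rw [wrd_none GA P e ι h2]
    | some lam => rw [wrd_some GA P e ι h2, lam.2.1 j, pidx_spec e h]

lemma Emap_inj (l : Line (Cop GA P e) ι) : Function.Injective (Emap GA P e ι l) := by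
  intro x y hxy
  obtain ⟨s₀, hs₀⟩ := l.proper
  cases hx : pidx e (P.part x) with
  | none =>
    cases hy : pidx e (P.part y) with
    | none =>
      rw [Emap_inr GA P e ι hx, Emap_inr GA P e ι hy] at hxy
      exact (Prod.mk.injEq _ _ _ _ ▸ (Sum.inr.injEq _ _ ▸ hxy)).2
    | some j =>
      rw [Emap_inr GA P e ι hx, Emap_inl GA P e ι hy] at hxy
      exact absurd hxy (by simp)
  | some j =>
    cases hy : pidx e (P.part y) with
    | none =>
      rw [Emap_inl GA P e ι hx, Emap_inr GA P e ι hy] at hxy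
      exact absurd hxy (by simp)
    | some j' =>
      rw [Emap_inl GA P e ι hx, Emap_inl GA P e ι hy] at hxy
      have hw : wrd GA P e ι l x j = wrd GA P e ι l y j' := by
        exact Sum.inl.injEq _ _ ▸ hxy
      have := congrFun hw s₀
      rwa [wrd_none GA P e ι hs₀, wrd_none GA P e ι hs₀] at this

lemma Emap_cop (he : Function.Injective e) (l : Line (Cop GA P e) ι)
    (lam : Cop GA P e) (j : Fin a) :
    Emap GA P e ι l (lam.1 j) = Smap GA P e ι (l lam) j := by
  have hp : pidx e (P.part (lam.1 j)) = some j := by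
    rw [lam.2.1 j]; exact pidx_some e he j
  rw [Emap_inl GA P e ι hp]
  unfold Smap
  congr 1
  funext s
  show wrd GA P e ι l (lam.1 j) j s = ((l lam) s).1 j
  cases hs : l.idxFun s with
  | none => rw [wrd_none GA P e ι hs, Line.apply_none l lam s hs]
  | some mu => rw [wrd_some GA P e ι hs, Line.apply_some hs]

lemma Emap_adj (he : Function.Injective e) (i₀ : ι) (l : Line (Cop GA P e) ι) (x y : P.V) :
    adjQ GA P e ι (Emap GA P e ι l x) (Emap GA P e ι l y) ↔ P.adj x y := by
  constructor
  · rintro ⟨l', x', y', hadj, hx, hy⟩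
    have hpx : P.part x = P.part x' := by
      have h1 := Emap_part GA P e ι i₀ l x
      have h2 := Emap_part GA P e ι i₀ l' x'
      rw [← h1, ← h2, hx]
    have hpy : P.part y = P.part y' := by
      have h1 := Emap_part GA P e ι i₀ l y
      have h2 := Emap_part GA P e ι i₀ l' y'
      rw [← h1, ← h2, hy]
    cases hix : pidx e (P.part x) with
    | none =>
      have hix' : pidx e (P.part x') = none := by rw [← hpx]; exact hix
      rw [Emap_inr GA P e ι hix, Emap_inr GA P e ι hix'] at hx
      obtain ⟨hl, hxx⟩ : l.idxFun = l'.idxFun ∧ x = x' := by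
        constructor
        · exact congrArg Prod.fst (Sum.inr.injEq _ _ ▸ hx)
        · exact congrArg Prod.snd (Sum.inr.injEq _ _ ▸ hx)
      have hll : l = l' := by
        cases l; cases l'; simpa using hl
      subst hll
      have hyy : y = y' := Emap_inj GA P e ι l (hy : _)
      rw [hxx, hyy]; exact hadj
    | some j₁ =>
      have hix' : pidx e (P.part x') = some j₁ := by rw [← hpx]; exact hix
      cases hiy : pidx e (P.part y) with
      | none =>
        have hiy' : pidx e (P.part y') = none := by rw [← hpy]; exact hiy
        rw [Emap_inr GA P e ι hiy, Emap_inr GA P e ι hiy'] at hy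
        obtain ⟨hl, hyy⟩ : l.idxFun = l'.idxFun ∧ y = y' := by
          constructor
          · exact congrArg Prod.fst (Sum.inr.injEq _ _ ▸ hy)
          · exact congrArg Prod.snd (Sum.inr.injEq _ _ ▸ hy)
        have hll : l = l' := by cases l; cases l'; simpa using hl
        subst hll
        have hxx : x = x' := Emap_inj GA P e ι l (hx : _)
        rw [hxx, hyy]; exact hadj
      | some j₂ =>
        have hiy' : pidx e (P.part y') = some j₂ := by rw [← hpy]; exact hiy
        rw [Emap_inl GA P e ι hix, Emap_inl GA P e ι hix'] at hx
        rw [Emap_inl GA P e ι hiy, Emap_inl GA P e ι hiy'] at hy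
        have hwx : wrd GA P e ι l x j₁ = wrd GA P e ι l' x' j₁ := Sum.inl.injEq _ _ ▸ hx
        have hwy : wrd GA P e ι l y j₂ = wrd GA P e ι l' y' j₂ := Sum.inl.injEq _ _ ▸ hy
        by_cases hboth : ∃ s, l.idxFun s = none ∧ l'.idxFun s = none
        · obtain ⟨s, hs, hs'⟩ := hboth
          have hxx : x = x' := by
            have := congrFun hwx s
            rwa [wrd_none GA P e ι hs, wrd_none GA P e ι hs'] at this
          have hyy : y = y' := by
            have := congrFun hwy s
            rwa [wrd_none GA P e ι hs, wrd_none GA P e ι hs'] at this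
          rw [hxx, hyy]; exact hadj
        · push_neg at hboth
          obtain ⟨s₁, hs₁⟩ := l.proper
          obtain ⟨lam', hlam'⟩ := Option.ne_none_iff_exists'.mp (hboth s₁ hs₁)
          have hx1 : x = lam'.1 j₁ := by
            have := congrFun hwx s₁
            rwa [wrd_none GA P e ι hs₁, wrd_some GA P e ι hlam'] at this
          have hy1 : y = lam'.1 j₂ := by
            have := congrFun hwy s₁
            rwa [wrd_none GA P e ι hs₁, wrd_some GA P e ι hlam'] at this
          obtain ⟨s₂, hs₂⟩ := l'.proper
          have hne : l.idxFun s₂ ≠ none := fun hc => hboth s₂ hc hs₂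
          obtain ⟨lam, hlam⟩ := Option.ne_none_iff_exists'.mp hne
          have hx2 : x' = lam.1 j₁ := by
            have := congrFun hwx s₂
            rw [wrd_some GA P e ι hlam, wrd_none GA P e ι hs₂] at this
            exact this.symm
          have hy2 : y' = lam.1 j₂ := by
            have := congrFun hwy s₂
            rw [wrd_some GA P e ι hlam, wrd_none GA P e ι hs₂] at this
            exact this.symm
          have hGA : GA j₁ j₂ := by
            apply (lam.2.2 j₁ j₂).mp
            rw [← hx2, ← hy2]; exact hadj
          rw [hx1, hy1]
          exact (lam'.2.2 j₁ j₂).mpr hGA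
  · intro h; exact ⟨l, x, y, h, rfl, rfl⟩

section Ord

variable [LinearOrder ι] [Fintype ι]

/-- The payload used to linearly order the new picture. -/
noncomputable def payload (encf : (ι → Option (Cop GA P e)) → ℕ) :
    QV GA P e ι → ((Lex (ι → ℕ)) ⊕ₗ (ℕ ×ₗ ℕ)) :=
  Sum.elim (fun w => toLex (Sum.inl (toLex (fun s => P.key (w s)))))
           (fun q => toLex (Sum.inr (toLex (P.key q.2, encf q.1))))

/-- The lexicographic key of the new picture. -/
noncomputable def ordQ (i₀ : ι) (encf : (ι → Option (Cop GA P e)) → ℕ)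
    (v : QV GA P e ι) : ℕ ×ₗ ((Lex (ι → ℕ)) ⊕ₗ (ℕ ×ₗ ℕ)) :=
  toLex (partQ GA P e ι i₀ v, payload GA P e ι encf v)

lemma ordQ_inj (i₀ : ι) {encf : (ι → Option (Cop GA P e)) → ℕ}
    (hencf : Function.Injective encf) :
    Function.Injective (ordQ GA P e ι i₀ encf) := by
  intro u v h
  have h2 : payload GA P e ι encf u = payload GA P e ι encf v :=
    congrArg (fun z => (ofLex z).2) h
  rcases u with w | ⟨f, x⟩ <;> rcases v with w' | ⟨f', x'⟩
  · simp only [payload, Sum.elim_inl] at h2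
    have h3 := Sum.inl.injEq _ _ ▸ toLex.injective h2
    have h4 : (fun s => P.key (w s)) = fun s => P.key (w' s) := toLex.injective h3
    exact congrArg Sum.inl (funext fun s => P.keyinj (congrFun h4 s))
  · simp only [payload, Sum.elim_inl, Sum.elim_inr] at h2
    exact absurd (toLex.injective h2) (by simp)
  · simp only [payload, Sum.elim_inl, Sum.elim_inr] at h2
    exact absurd (toLex.injective h2) (by simp)
  · simp only [payload, Sum.elim_inr] at h2
    have h3 := Sum.inr.injEq _ _ ▸ toLex.injective h2
    have h4 : (P.key x, encf f) = (P.key x', encf f') := toLex.injective h3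
    have hx : x = x' := P.keyinj (congrArg Prod.fst h4)
    have hf : f = f' := hencf (congrArg Prod.snd h4)
    rw [hx, hf]

lemma Emap_key (i₀ : ι) (encf : (ι → Option (Cop GA P e)) → ℕ)
    (l : Line (Cop GA P e) ι) (x y : P.V) (h : P.key x < P.key y) :
    ordQ GA P e ι i₀ encf (Emap GA P e ι l x) < ordQ GA P e ι i₀ encf (Emap GA P e ι l y) := by
  classical
  rcases Nat.lt_trichotomy (P.part x) (P.part y) with hp | hp | hp
  · unfold ordQ
    rw [Prod.Lex.lt_iff]
    left
    show partQ GA P e ι i₀ (Emap GA P e ι l x) < partQ GA P e ι i₀ (Emap GA P e ι l y)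
    rw [Emap_part, Emap_part]; exact hp
  · unfold ordQ
    rw [Prod.Lex.lt_iff]
    right
    constructor
    · show partQ GA P e ι i₀ (Emap GA P e ι l x) = partQ GA P e ι i₀ (Emap GA P e ι l y)
      rw [Emap_part, Emap_part, hp]
    · show payload GA P e ι encf (Emap GA P e ι l x) < payload GA P e ι encf (Emap GA P e ι l y)
      have hpq : pidx e (P.part y) = pidx e (P.part x) := by rw [hp]
      cases hix : pidx e (P.part x) with
      | none =>
        have hiy : pidx e (P.part y) = none := by rw [hpq]; exact hix
        rw [Emap_inr GA P e ι hix, Emap_inr GA P e ι hiy]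
        simp only [payload, Sum.elim_inr]
        apply Sum.Lex.inr_lt_inr_iff.mpr
        rw [Prod.Lex.lt_iff]
        left; exact h
      | some j =>
        have hiy : pidx e (P.part y) = some j := by rw [hpq]; exact hix
        rw [Emap_inl GA P e ι hix, Emap_inl GA P e ι hiy]
        simp only [payload, Sum.elim_inl]
        apply Sum.Lex.inl_lt_inl_iff.mpr
        set W : Finset ι := Finset.univ.filter (fun s => l.idxFun s = none) with hWdef
        have hW : W.Nonempty := by
          obtain ⟨s₁, hs₁⟩ := l.proper
          exact ⟨s₁, by simp [hWdef, hs₁]⟩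
        set smin := W.min' hW with hsmindef
        have hsmin : l.idxFun smin = none :=
          (Finset.mem_filter.mp (W.min'_mem hW)).2
        refine ⟨smin, fun s' hs' => ?_, ?_⟩
        · have hs'W : s' ∉ W := fun hmem => absurd hs' (not_lt.mpr (W.min'_le s' hmem))
          have hne : l.idxFun s' ≠ none := fun hc => hs'W (by simp [hWdef, hc])
          obtain ⟨lam, hlam⟩ := Option.ne_none_iff_exists'.mp hne
          show P.key (wrd GA P e ι l x j s') = P.key (wrd GA P e ι l y j s')
          rw [wrd_some GA P e ι hlam, wrd_some GA P e ι hlam]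
        · show P.key (wrd GA P e ι l x j smin) < P.key (wrd GA P e ι l y j smin)
          rw [wrd_none GA P e ι hsmin, wrd_none GA P e ι hsmin]; exact h
  · exact absurd (P.hpart y x hp) (by omega)

end Ord

end Stage

/-- The partite lemma: one stage of the partite construction. -/
theorem stage {k : ℕ} (hk : 0 < k) (GA : Fin a → Fin a → Prop) (P : Pic) (e : Fin a → ℕ)
    (he : Function.Injective e) :
    ∃ Q : Pic, ∀ χ : (Fin a → Q.V) → Fin k, ∃ F, PicEmb P Q F ∧
      ∃ i : Fin k, ∀ f, IsCopy GA P e f → χ (F ∘ f) = i := by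
  classical
  by_cases hL : Nonempty (Cop GA P e)
  case neg =>
    exact ⟨P, fun χ => ⟨id, PicEmb.refl P, ⟨0, hk⟩, fun f hf => absurd ⟨⟨f, hf⟩⟩ hL⟩⟩
  obtain ⟨ι, ιfin, hHJ⟩ := Line.exists_mono_in_high_dimension (Cop GA P e) (Fin k)
  haveI := ιfin
  obtain ⟨l₀, -⟩ := hHJ (fun _ => ⟨0, hk⟩)
  obtain ⟨i₀, -⟩ := l₀.proper
  letI : LinearOrder ι := IsWellOrder.linearOrder WellOrderingRel
  haveI : WellFoundedLT ι := Finite.to_wellFoundedLT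
  obtain ⟨encf, hencf⟩ := exists_injective_nat ((ι → Option (Cop GA P e)))
  haveI : Fintype (QV GA P e ι) := Fintype.ofFinite _
  letI : LinearOrder (QV GA P e ι) := LinearOrder.lift' (ordQ GA P e ι i₀ encf) (ordQ_inj GA P e ι i₀ hencf)
  let iso := monoEquivOfFin (QV GA P e ι) rfl
  let key : QV GA P e ι → ℕ := fun v => (iso.symm v : ℕ)
  have hkey : ∀ u v : QV GA P e ι,
      ordQ GA P e ι i₀ encf u < ordQ GA P e ι i₀ encf v → key u < key v := by
    intro u v h
    have hlt : u < v := h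
    exact iso.symm.lt_iff_lt.mpr hlt
  have hkeyinj : Function.Injective key := by
    intro u v h
    exact iso.symm.injective (Fin.val_injective h)
  refine ⟨⟨QV GA P e ι, inferInstance, adjQ GA P e ι, ?_, ?_, partQ GA P e ι i₀, key,
    hkeyinj, ?_⟩, ?_⟩
  · rintro u v ⟨l, x, y, hadj, rfl, rfl⟩
    exact ⟨l, y, x, P.symm _ _ hadj, rfl, rfl⟩
  · rintro u ⟨l, x, y, hadj, rfl, heq⟩
    have hxy : x = y := Emap_inj GA P e ι l heq
    exact P.irrefl x (hxy ▸ hadj)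
  · intro u v h
    apply hkey
    unfold ordQ
    rw [Prod.Lex.lt_iff]
    left
    exact h
  · intro χ
    obtain ⟨l, i, hmono⟩ := hHJ (fun p => χ (Smap GA P e ι p))
    refine ⟨Emap GA P e ι l, ⟨Emap_part GA P e ι i₀ l, ?_, ?_⟩, i, ?_⟩
    · intro x y
      exact (Emap_adj GA P e ι he i₀ l x y).symm
    · intro x y h
      exact hkey _ _ (Emap_key GA P e ι i₀ encf l x y h)
    · intro f hf
      have hcomp : (Emap GA P e ι l) ∘ f = Smap GA P e ι (l ⟨f, hf⟩) := by
        funext j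
        exact Emap_cop GA P e ι he l ⟨f, hf⟩ j
      rw [hcomp]
      exact hmono ⟨f, hf⟩

/-- Iterating the partite lemma over a list of part-sets. -/
theorem tower {k : ℕ} (hk : 0 < k) (GA : Fin a → Fin a → Prop)
    (es : List (Fin a → ℕ)) (hes : ∀ e ∈ es, Function.Injective e) (P : Pic) :
    ∃ Q : Pic, ∀ χ : (Fin a → Q.V) → Fin k, ∃ F, PicEmb P Q F ∧
      ∃ c : (Fin a → ℕ) → Fin k, ∀ e ∈ es, ∀ f, IsCopy GA P e f → χ (F ∘ f) = c e := by
  induction es generalizing P with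
  | nil =>
    exact ⟨P, fun χ => ⟨id, PicEmb.refl P, fun _ => ⟨0, hk⟩,
      fun e he => absurd he List.not_mem_nil⟩⟩
  | cons e es ih =>
    obtain ⟨Q₁, hQ₁⟩ := stage hk GA P e (hes e List.mem_cons_self)
    obtain ⟨Q, hQ⟩ := ih (fun e' he' => hes e' (List.mem_cons_of_mem e he')) Q₁
    refine ⟨Q, fun χ => ?_⟩
    obtain ⟨F₁, hFemb₁, c₁, hc₁⟩ := hQ χ
    obtain ⟨F₀, hFemb₀, i, hi⟩ := hQ₁ (fun p => χ (F₁ ∘ p))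
    refine ⟨F₁ ∘ F₀, PicEmb.comp hFemb₀ hFemb₁,
      fun e' => if e' = e then i else c₁ e', ?_⟩
    intro e' he' f hf
    by_cases hee : e' = e
    · subst hee
      simpa [Function.comp_assoc] using hi f hf
    · rcases List.mem_cons.mp he' with h | h
      · exact absurd h hee
      · simpa [hee, Function.comp_assoc] using hc₁ e' h (F₀ ∘ f) (PicEmb.copy hFemb₀ hf)

/-- Any injective key into a linear order can be replaced by an ℕ-valued one. -/
lemma exists_rank {α : Type} [Finite α] {κ : Type} [LinearOrder κ] (f : α → κ)
    (hf : Function.Injective f) :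
    ∃ r : α → ℕ, Function.Injective r ∧ ∀ u v, f u < f v → r u < r v := by
  classical
  haveI := Fintype.ofFinite α
  letI : LinearOrder α := LinearOrder.lift' f hf
  obtain ⟨iso⟩ : Nonempty (Fin (Fintype.card α) ≃o α) := ⟨monoEquivOfFin α rfl⟩
  refine ⟨fun v => ((iso.symm v : Fin _) : ℕ), ?_, ?_⟩
  · intro u v h
    exact iso.symm.injective (Fin.val_injective h)
  · intro u v h
    have hlt : u < v := h
    exact iso.symm.lt_iff_lt.mpr hlt

open scoped Classical in
/-- The increasing enumeration of an `na`-subset of ℕ (junk otherwise). -/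
noncomputable def efn (na : ℕ) (s : Finset ℕ) : Fin na → ℕ :=
  if h : s.card = na then ⇑(s.orderEmbOfFin h) else fun _ => 0

lemma efn_eq {na : ℕ} {s : Finset ℕ} (h : s.card = na) :
    efn na s = ⇑(s.orderEmbOfFin h) := dif_pos h

end OGRamsey

/-- A finite linearly ordered graph: a finite vertex set with a symmetric irreflexive
adjacency relation and a (strict) linear order on the vertices. -/
structure OrdGraph where
  V : Type
  finite : Finite V
  adj : V → V → Prop
  adj_symm : ∀ x y, adj x y → adj y x
  adj_irrefl : ∀ x, ¬ adj x x
  lt : V → V → Prop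
  lt_irrefl : ∀ x, ¬ lt x x
  lt_trans : ∀ x y z, lt x y → lt y z → lt x z
  lt_total : ∀ x y, lt x y ∨ x = y ∨ lt y x

/-- An embedding of linearly ordered graphs: an injective map which preserves and reflects
adjacency and preserves the linear order. -/
def OrdGraph.Emb (G H : OrdGraph) (f : G.V → H.V) : Prop :=
  Function.Injective f ∧
  (∀ x y, G.adj x y ↔ H.adj (f x) (f y)) ∧
  (∀ x y, G.lt x y → H.lt (f x) (f y))

/-- The class of all finite linearly ordered graphs has the Ramsey property. -/
theorem orderedGraphs_ramsey (k : ℕ) (hk : 2 ≤ k) (G H : OrdGraph)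
    (hGH : ∃ f, OrdGraph.Emb G H f) :
    ∃ K : OrdGraph, ∀ χ : (G.V → K.V) → Fin k,
      ∃ w, OrdGraph.Emb H K w ∧ ∃ i : Fin k,
        ∀ g, OrdGraph.Emb G H g → χ (w ∘ g) = i := by
  classical
  clear hGH
  haveI := G.finite
  haveI := H.finite
  haveI : IsStrictTotalOrder G.V G.lt :=
    { trichotomous := fun a b h1 h2 => (G.lt_total a b).elim (fun h => absurd h h1) (fun h => h.elim id (fun h => absurd h h2)), irrefl := G.lt_irrefl, trans := G.lt_trans }
  haveI : IsStrictTotalOrder H.V H.lt :=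
    { trichotomous := fun a b h1 h2 => (H.lt_total a b).elim (fun h => absurd h h1) (fun h => h.elim id (fun h => absurd h h2)), irrefl := H.lt_irrefl, trans := H.lt_trans }
  letI : LinearOrder G.V := linearOrderOfSTO G.lt
  letI : LinearOrder H.V := linearOrderOfSTO H.lt
  letI := Fintype.ofFinite G.V
  letI := Fintype.ofFinite H.V
  have hk' : 0 < k := by omega
  obtain ⟨gIso⟩ : Nonempty (Fin (Fintype.card G.V) ≃o G.V) := ⟨monoEquivOfFin G.V rfl⟩
  obtain ⟨hIso⟩ : Nonempty (Fin (Fintype.card H.V) ≃o H.V) := ⟨monoEquivOfFin H.V rfl⟩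
  obtain ⟨N, hN⟩ := OGRamsey.ramseyNat (Fintype.card G.V) k (Fintype.card H.V) hk'
  -- the list of all potential part-sets
  have hes : ∀ e ∈ ((Finset.range N).powersetCard (Fintype.card G.V)).toList.map
      (OGRamsey.efn (Fintype.card G.V)), Function.Injective e := by
    intro e he
    obtain ⟨s, hs, rfl⟩ := List.mem_map.mp he
    have hcard : s.card = Fintype.card G.V :=
      (Finset.mem_powersetCard.mp (Finset.mem_toList.mp hs)).2
    rw [OGRamsey.efn_eq hcard]
    exact (s.orderEmbOfFin hcard).injective
  -- the base picture
  obtain ⟨encS, hencS⟩ :=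
    exists_injective_nat {x // x ∈ (Finset.range N).powersetCard (Fintype.card H.V)}
  have hordinj : Function.Injective
      (fun u : {x // x ∈ (Finset.range N).powersetCard (Fintype.card H.V)}
          × Fin (Fintype.card H.V) =>
        (toLex (u.1.1.orderEmbOfFin (Finset.mem_powersetCard.mp u.1.2).2 u.2,
          toLex (encS u.1, (u.2 : ℕ))) : ℕ ×ₗ (ℕ ×ₗ ℕ))) := by
    intro u v h
    have h2 : (encS u.1, (u.2 : ℕ)) = (encS v.1, (v.2 : ℕ)) :=
      toLex.injective (congrArg (fun z => (ofLex z).2) h)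
    have hs : u.1 = v.1 := hencS (congrArg Prod.fst h2)
    have hj : u.2 = v.2 := Fin.val_injective (congrArg Prod.snd h2)
    exact Prod.ext hs hj
  obtain ⟨key0, hkey0inj, hkey0⟩ := OGRamsey.exists_rank _ hordinj
  set P₀ : OGRamsey.Pic :=
    { V := {x // x ∈ (Finset.range N).powersetCard (Fintype.card H.V)}
        × Fin (Fintype.card H.V)
      fin := inferInstance
      adj := fun u v => u.1 = v.1 ∧ H.adj (hIso u.2) (hIso v.2)
      symm := fun u v h => ⟨h.1.symm, H.adj_symm _ _ h.2⟩
      irrefl := fun u h => H.adj_irrefl _ h.2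
      part := fun u => u.1.1.orderEmbOfFin (Finset.mem_powersetCard.mp u.1.2).2 u.2
      key := key0
      keyinj := hkey0inj
      hpart := by
        intro u v h
        apply hkey0
        rw [Prod.Lex.lt_iff]
        left
        exact h } with hP₀def
  obtain ⟨Q, hQ⟩ := OGRamsey.tower hk'
    (fun j₁ j₂ => G.adj (gIso j₁) (gIso j₂))
    (((Finset.range N).powersetCard (Fintype.card G.V)).toList.map
      (OGRamsey.efn (Fintype.card G.V))) hes P₀
  refine ⟨⟨Q.V, Q.fin, Q.adj, Q.symm, Q.irrefl, fun u v => Q.key u < Q.key v,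
    fun u => Nat.lt_irrefl _, fun u v w' => Nat.lt_trans, ?_⟩, ?_⟩
  · intro u v
    rcases Nat.lt_trichotomy (Q.key u) (Q.key v) with h | h | h
    · exact Or.inl h
    · exact Or.inr (Or.inl (Q.keyinj h))
    · exact Or.inr (Or.inr h)
  intro χ
  obtain ⟨F, hFemb, c, hc⟩ := hQ (fun p => χ (fun v => p (gIso.symm v)))
  obtain ⟨T, hTV, hTcard, i, hi⟩ := hN (fun s => c (OGRamsey.efn (Fintype.card G.V) s))
    (Finset.range N) (le_of_eq (Finset.card_range N).symm)
  have hTmem : T ∈ (Finset.range N).powersetCard (Fintype.card H.V) :=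
    Finset.mem_powersetCard.mpr ⟨hTV, hTcard⟩
  refine ⟨fun v => F ⟨⟨T, hTmem⟩, hIso.symm v⟩, ⟨?_, ?_, ?_⟩, i, ?_⟩
  · -- injectivity
    intro x y hxy
    have h1 := hFemb.inj hxy
    have h2 : hIso.symm x = hIso.symm y := congrArg Prod.snd h1
    exact hIso.symm.injective h2
  · -- adjacency
    intro x y
    have hP : H.adj x y ↔ P₀.adj ⟨⟨T, hTmem⟩, hIso.symm x⟩ ⟨⟨T, hTmem⟩, hIso.symm y⟩ := by
      constructor
      · intro h
        exact ⟨rfl, by rwa [OrderIso.apply_symm_apply, OrderIso.apply_symm_apply]⟩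
      · rintro ⟨-, h⟩
        rwa [OrderIso.apply_symm_apply, OrderIso.apply_symm_apply] at h
    exact hP.trans (hFemb.2.1 _ _)
  · -- order
    intro x y hxy
    apply hFemb.2.2
    apply P₀.hpart
    show T.orderEmbOfFin _ (hIso.symm x) < T.orderEmbOfFin _ (hIso.symm y)
    apply (T.orderEmbOfFin _).strictMono
    exact hIso.symm.lt_iff_lt.mpr (show x < y from hxy)
  · -- monochromaticity
    intro g hg
    have hm : StrictMono (fun j => hIso.symm (g (gIso j))) := by
      intro j₁ j₂ hj
      exact hIso.symm.lt_iff_lt.mpr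
        (show g (gIso j₁) < g (gIso j₂) from hg.2.2 _ _ (show G.lt _ _ from gIso.lt_iff_lt.mpr hj))
    have hinj2 : Function.Injective (fun j => T.orderEmbOfFin hTcard (hIso.symm (g (gIso j)))) :=
      fun j₁ j₂ h => hm.injective ((T.orderEmbOfFin hTcard).injective h)
    have hsgcard : (Finset.image (fun j => T.orderEmbOfFin hTcard (hIso.symm (g (gIso j))))
        Finset.univ).card = Fintype.card G.V := by
      rw [Finset.card_image_of_injective _ hinj2, Finset.card_univ, Fintype.card_fin]
    have hsgT : (Finset.image (fun j => T.orderEmbOfFin hTcard (hIso.symm (g (gIso j))))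
        Finset.univ) ⊆ T := by
      intro z hz
      obtain ⟨j, -, rfl⟩ := Finset.mem_image.mp hz
      exact Finset.orderEmbOfFin_mem T hTcard _
    have hefn : OGRamsey.efn (Fintype.card G.V)
        (Finset.image (fun j => T.orderEmbOfFin hTcard (hIso.symm (g (gIso j)))) Finset.univ)
        = fun j => T.orderEmbOfFin hTcard (hIso.symm (g (gIso j))) := by
      rw [OGRamsey.efn_eq hsgcard]
      symm
      apply Finset.orderEmbOfFin_unique hsgcard
      · intro x
        exact Finset.mem_image_of_mem _ (Finset.mem_univ x)
      · exact (T.orderEmbOfFin hTcard).strictMono.comp hm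
    have hmemes : OGRamsey.efn (Fintype.card G.V)
        (Finset.image (fun j => T.orderEmbOfFin hTcard (hIso.symm (g (gIso j)))) Finset.univ)
        ∈ ((Finset.range N).powersetCard (Fintype.card G.V)).toList.map
          (OGRamsey.efn (Fintype.card G.V)) :=
      List.mem_map.mpr ⟨_, Finset.mem_toList.mpr
        (Finset.mem_powersetCard.mpr ⟨hsgT.trans hTV, hsgcard⟩), rfl⟩
    have hcopy : OGRamsey.IsCopy (fun j₁ j₂ => G.adj (gIso j₁) (gIso j₂)) P₀
        (OGRamsey.efn (Fintype.card G.V)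
          (Finset.image (fun j => T.orderEmbOfFin hTcard (hIso.symm (g (gIso j)))) Finset.univ))
        (fun j => ⟨⟨T, hTmem⟩, hIso.symm (g (gIso j))⟩) := by
      constructor
      · intro j
        rw [hefn]
      · intro j₁ j₂
        constructor
        · rintro ⟨-, h2⟩
          apply (hg.2.1 _ _).mpr
          rwa [OrderIso.apply_symm_apply, OrderIso.apply_symm_apply] at h2
        · intro h
          refine ⟨rfl, ?_⟩
          rw [OrderIso.apply_symm_apply, OrderIso.apply_symm_apply]
          exact (hg.2.1 _ _).mp h
    have h1 := hc _ hmemes _ hcopy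
    have h2 : (fun v => (F ∘ fun j => (⟨⟨T, hTmem⟩, hIso.symm (g (gIso j))⟩ : P₀.V))
        (gIso.symm v)) = (fun v => F ⟨⟨T, hTmem⟩, hIso.symm v⟩) ∘ g := by
      funext v
      show F ⟨⟨T, hTmem⟩, hIso.symm (g (gIso (gIso.symm v)))⟩ = F ⟨⟨T, hTmem⟩, hIso.symm (g v)⟩
      rw [OrderIso.apply_symm_apply]
    have h1' : χ (fun v => (F ∘ fun j => (⟨⟨T, hTmem⟩, hIso.symm (g (gIso j))⟩ : P₀.V))
        (gIso.symm v)) = c (OGRamsey.efn (Fintype.card G.V)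
        (Finset.image (fun j => T.orderEmbOfFin hTcard (hIso.symm (g (gIso j)))) Finset.univ)) := h1
    rw [h2] at h1'
    rw [h1']
    exact hi _ hsgT hsgcard
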